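/- In the group G = GL₂(ℝ) ⋉ ℝ², let p = ((a, b; 0, z), (0,0)) ∈ P (upper triangular linear part, zero translation) and n = ((1, 0; c, 1), (x, y)) ∈ N (lower unitriangular linear part with translation). Then, whenever a − bc ≠ 0, the dressing actions determined by n⁻¹ p = β_n(p) α_p(n)⁻¹-type factorization (equivalently p n⁻¹ = α_p(n)⁻¹β_n(p)) are given explicitly by β_n(p) = ((a−bc, b; 0, za/(a−bc)), (0,0)) and α_p(n) = ((1, 0; zc/(a−bc), 1), ((a−bc)x + by, (za/(a−bc))y)). -/

import Mathlib

open Matrix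

lemma aux_inv (s t u : ℝ) :
    (!![1, 0, t; s, 1, u; 0, 0, 1] : Matrix (Fin 3) (Fin 3) ℝ)⁻¹ =
      !![1, 0, -t; -s, 1, s * t - u; 0, 0, 1] := by
  apply Matrix.inv_eq_right_inv
  ext i j
  fin_cases i <;> fin_cases j <;>
    simp [Matrix.mul_apply, Fin.sum_univ_succ] <;> ring

/-- Explicit dressing actions for `G = GL₂(ℝ) ⋉ ℝ²` (realized as 3×3 affine matrices):
for `p = ((a,b;0,z), 0) ∈ P` and `n = ((1,0;c,1),(x,y)) ∈ N` with `a - bc ≠ 0`, the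
factorization `p n⁻¹ = α_p(n)⁻¹ β_n(p)` holds with
`β_n(p) = ((a−bc, b; 0, za/(a−bc)), (0,0))` and
`α_p(n) = ((1, 0; zc/(a−bc), 1), ((a−bc)x + by, (za/(a−bc))y))`. -/
theorem gl2_affine_dressing (a b z c x y : ℝ)
    (ha : a ≠ 0) (hz : z ≠ 0) (habc : a - b * c ≠ 0) :
    (!![a, b, 0; 0, z, 0; 0, 0, 1] : Matrix (Fin 3) (Fin 3) ℝ) *
        (!![1, 0, x; c, 1, y; 0, 0, 1] : Matrix (Fin 3) (Fin 3) ℝ)⁻¹ =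
      (!![1, 0, (a - b * c) * x + b * y;
          z * c / (a - b * c), 1, (z * a / (a - b * c)) * y;
          0, 0, 1] : Matrix (Fin 3) (Fin 3) ℝ)⁻¹ *
        !![a - b * c, b, 0; 0, z * a / (a - b * c), 0; 0, 0, 1] := by
  rw [aux_inv c x y, aux_inv (z * c / (a - b * c)) ((a - b * c) * x + b * y)
    ((z * a / (a - b * c)) * y)]
  ext i j
  fin_cases i <;> fin_cases j <;>
    · try simp [Matrix.mul_apply, Fin.sum_univ_succ]
      try field_simp [show a - c * b ≠ 0 by rwa [mul_comm]]
      try ring
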